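/- Let g : ℝ² → ℝ be a smooth compactly supported function and c := exp∘g. Then (1/2)∫_{ℝ²} c⁻² |∇c|² Δc dx − ∫_{ℝ²} c⁻¹ (Δc)² dx = −∫_{ℝ²} c |D²(ln c)|² dx. -/

import Mathlib

open MeasureTheory Real

noncomputable section

/-- The plane `ℝ²` as a Euclidean space. -/
abbrev E2 : Type := EuclideanSpace ℝ (Fin 2)

/-- `i`-th partial derivative of a scalar function on `ℝ²`. -/
def pd (i : Fin 2) (f : E2 → ℝ) (x : E2) : ℝ :=
  fderiv ℝ f x (EuclideanSpace.single i 1)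

/-- Laplacian `Δf = ∑ i, ∂_i ∂_i f`. -/
def lap (f : E2 → ℝ) (x : E2) : ℝ := ∑ i, pd i (pd i f) x

/-- `|∇f|² = ∑ i, (∂_i f)²`. -/
def gradSq (f : E2 → ℝ) (x : E2) : ℝ := ∑ i, (pd i f x) ^ 2

/-- Squared Frobenius norm of the Hessian: `|D²f|² = ∑ i j, (∂²_{ij} f)²`. -/
def hessSq (f : E2 → ℝ) (x : E2) : ℝ := ∑ i, ∑ j, (pd i (pd j f) x) ^ 2

/-- `⟨D²f ∇f, ∇f⟩ = ∑ i j, (∂²_{ij} f)(∂_i f)(∂_j f)`. -/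
def hessGrad (f : E2 → ℝ) (x : E2) : ℝ :=
  ∑ i, ∑ j, pd i (pd j f) x * pd i f x * pd j f x

end


lemma htop1 : ((⊤ : ℕ∞) : WithTop ℕ∞) + 1 ≤ ((⊤ : ℕ∞) : WithTop ℕ∞) := by
  norm_cast

lemma contDiff_pd {f : E2 → ℝ} (hf : ContDiff ℝ (⊤ : ℕ∞) f) (i : Fin 2) :
    ContDiff ℝ (⊤ : ℕ∞) (pd i f) :=
  (hf.fderiv_right htop1).clm_apply contDiff_const

lemma diffAt {f : E2 → ℝ} (hf : ContDiff ℝ (⊤ : ℕ∞) f) (x : E2) : DifferentiableAt ℝ f x :=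
  (hf.differentiable (by norm_cast)).differentiableAt

lemma cont {f : E2 → ℝ} (hf : ContDiff ℝ (⊤ : ℕ∞) f) : Continuous f := hf.continuous

lemma hcs_pd {f : E2 → ℝ} (h : HasCompactSupport f) (i : Fin 2) :
    HasCompactSupport (pd i f) :=
  (h.fderiv (𝕜 := ℝ)).comp_left (g := fun L : E2 →L[ℝ] ℝ => L (EuclideanSpace.single i 1)) rfl

lemma pd_mul {f h : E2 → ℝ} (hf : ContDiff ℝ (⊤ : ℕ∞) f) (hh : ContDiff ℝ (⊤ : ℕ∞) h)
    (i : Fin 2) (x : E2) :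
    pd i (fun y => f y * h y) x = pd i f x * h x + f x * pd i h x := by
  unfold pd
  rw [fderiv_fun_mul (diffAt hf x) (diffAt hh x)]
  simp; ring

lemma pd_exp {f : E2 → ℝ} (hf : ContDiff ℝ (⊤ : ℕ∞) f) (i : Fin 2) (x : E2) :
    pd i (fun y => Real.exp (f y)) x = Real.exp (f x) * pd i f x := by
  unfold pd
  rw [fderiv_exp (diffAt hf x)]
  simp

lemma pd_sum {f : Fin 2 → E2 → ℝ} (hf : ∀ j, ContDiff ℝ (⊤ : ℕ∞) (f j)) (i : Fin 2) (x : E2) :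
    pd i (fun y => ∑ j, f j y) x = ∑ j, pd i (f j) x := by
  unfold pd
  rw [fderiv_fun_sum (fun j _ => diffAt (hf j) x)]
  simp

lemma pd_sq {f : E2 → ℝ} (hf : ContDiff ℝ (⊤ : ℕ∞) f) (i : Fin 2) (x : E2) :
    pd i (fun y => f y ^ 2) x = 2 * f x * pd i f x := by
  have h2 : (fun y => f y ^ 2) = fun y => f y * f y := by funext y; ring
  rw [h2, pd_mul hf hf]; ring

lemma pd_symm {f : E2 → ℝ} (hf : ContDiff ℝ (⊤ : ℕ∞) f) (i j : Fin 2) (x : E2) :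
    pd i (pd j f) x = pd j (pd i f) x := by
  have hsymm : IsSymmSndFDerivAt ℝ f x :=
    hf.contDiffAt.isSymmSndFDerivAt (by rw [minSmoothness_of_isRCLikeNormedField]; exact WithTop.coe_le_coe.mpr le_top)
  have hfd : ContDiff ℝ (⊤ : ℕ∞) (fderiv ℝ f) := hf.fderiv_right htop1
  have key : ∀ k l : Fin 2, pd k (pd l f) x
      = fderiv ℝ (fderiv ℝ f) x (EuclideanSpace.single k 1) (EuclideanSpace.single l 1) := by
    intro k l
    unfold pd
    rw [fderiv_clm_apply ((hfd.differentiable (by norm_cast)).differentiableAt) (differentiableAt_const _)]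
    simp
  rw [key, key]
  exact hsymm _ _


lemma oneD {f : ℝ → ℝ} (hf : ContDiff ℝ 1 f) (h2f : HasCompactSupport f) :
    ∫ x, deriv f x = 0 := by
  have hint : Integrable (deriv f) := by
    exact ((hf.continuous_deriv le_rfl)).integrable_of_hasCompactSupport h2f.deriv
  have h1 := h2f.integral_Iic_deriv_eq hf 0
  have h2 := h2f.integral_Ioi_deriv_eq hf 0
  rw [← intervalIntegral.integral_Iic_add_Ioi hint.integrableOn hint.integrableOn]
  rw [h1, h2]; ring



/-- The homeomorphism `ℝ × ℝ ≃ₜ E2`. -/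
noncomputable def Psi : (ℝ × ℝ) ≃ₜ E2 :=
  (Homeomorph.finTwoArrow).symm.trans
    (EuclideanSpace.equiv (Fin 2) ℝ).symm.toHomeomorph

lemma Psi_apply (p : ℝ × ℝ) (j : Fin 2) : Psi p j = ![p.1, p.2] j := rfl

lemma Psi_decomp_fst (b : ℝ) :
    (fun t : ℝ => Psi (t, b))
      = fun t => Psi (0, b) + t • (EuclideanSpace.single (0 : Fin 2) (1:ℝ)) := by
  funext t
  refine PiLp.ext fun j => ?_
  have h2 : ((Psi (0, b) + t • (EuclideanSpace.single (0 : Fin 2) (1:ℝ))) : E2) j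
      = Psi (0,b) j + t * (EuclideanSpace.single (0 : Fin 2) (1:ℝ)) j := rfl
  rw [h2, Psi_apply, Psi_apply]
  fin_cases j <;> simp [EuclideanSpace.single_apply]

lemma Psi_decomp_snd (a : ℝ) :
    (fun t : ℝ => Psi (a, t))
      = fun t => Psi (a, 0) + t • (EuclideanSpace.single (1 : Fin 2) (1:ℝ)) := by
  funext t
  refine PiLp.ext fun j => ?_
  have h2 : ((Psi (a, 0) + t • (EuclideanSpace.single (1 : Fin 2) (1:ℝ))) : E2) j
      = Psi (a,0) j + t * (EuclideanSpace.single (1 : Fin 2) (1:ℝ)) j := rfl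
  rw [h2, Psi_apply, Psi_apply]
  fin_cases j <;> simp [EuclideanSpace.single_apply]

lemma integral_line_pd_zero (F : E2 → ℝ) (hF : ContDiff ℝ (⊤ : ℕ∞) F)
    (hFc : HasCompactSupport F) (P : E2) (i : Fin 2) :
    ∫ t : ℝ, pd i F (P + t • EuclideanSpace.single i (1:ℝ)) = 0 := by
  set v := EuclideanSpace.single i (1:ℝ) with hv
  set φ : ℝ → E2 := fun t => P + t • v with hφ
  have hφd : ∀ t : ℝ, HasDerivAt φ v t := by
    intro t
    have := ((hasDerivAt_id t).smul_const v).const_add P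
    exact this.congr_deriv (one_smul ℝ v)
  have hd : ∀ t, HasDerivAt (F ∘ φ) (pd i F (φ t)) t := fun t =>
    (diffAt hF (φ t)).hasFDerivAt.comp_hasDerivAt t (hφd t)
  have hφsmooth : ContDiff ℝ 1 φ := contDiff_const.add (contDiff_id.smul contDiff_const)
  have hsmooth : ContDiff ℝ 1 (F ∘ φ) := (hF.of_le (by exact_mod_cast le_top)).comp hφsmooth
  have hiso : Isometry φ := by
    refine Isometry.of_dist_eq fun s t => ?_
    simp only [hφ, dist_eq_norm, add_sub_add_left_eq_sub, ← sub_smul, norm_smul,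
      EuclideanSpace.norm_single]
    rw [hv, EuclideanSpace.norm_single, norm_one, mul_one]
  have hcs : HasCompactSupport (F ∘ φ) := hFc.comp_isClosedEmbedding hiso.isClosedEmbedding
  have h0 := oneD hsmooth hcs
  calc ∫ t : ℝ, pd i F (φ t) = ∫ t : ℝ, deriv (F ∘ φ) t := by
        congr 1; funext t; exact ((hd t).deriv).symm
    _ = 0 := h0

lemma integral_pd_eq_zero {F : E2 → ℝ} (hF : ContDiff ℝ (⊤ : ℕ∞) F)
    (hFc : HasCompactSupport F) (i : Fin 2) : ∫ x : E2, pd i F x = 0 := by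
  have vp1 := (EuclideanSpace.volume_preserving_symm_measurableEquiv_toLp (Fin 2)).symm
  have vp2 := (volume_preserving_finTwoArrow ℝ).symm
  have hPsi : ∀ p : ℝ × ℝ,
      (MeasurableEquiv.toLp 2 (Fin 2 → ℝ)) ((MeasurableEquiv.finTwoArrow).symm p)
        = Psi p := fun p => rfl
  have h1 : ∫ x : E2, pd i F x = ∫ p : ℝ × ℝ, pd i F (Psi p) := by
    rw [← vp1.integral_comp (MeasurableEquiv.measurableEmbedding _) (pd i F)]
    rw [← vp2.integral_comp (MeasurableEquiv.measurableEmbedding _)]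
    rfl
  have hcont : Continuous fun p : ℝ × ℝ => pd i F (Psi p) :=
    (contDiff_pd hF i).continuous.comp Psi.continuous
  have hsupp : HasCompactSupport fun p : ℝ × ℝ => pd i F (Psi p) :=
    (hcs_pd hFc i).comp_isClosedEmbedding Psi.isClosedEmbedding
  have hint : Integrable (fun p : ℝ × ℝ => pd i F (Psi p)) volume :=
    hcont.integrable_of_hasCompactSupport hsupp
  rw [h1]
  fin_cases i <;> simp only [Fin.mk_zero, Fin.mk_one, Fin.isValue]
  · rw [Measure.volume_eq_prod, integral_prod_symm _ (by rwa [← Measure.volume_eq_prod])]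
    have hline : ∀ b : ℝ, ∫ a : ℝ, pd 0 F (Psi (a, b)) = 0 := by
      intro b
      have hdec := congrFun (Psi_decomp_fst b)
      have : (fun a : ℝ => pd 0 F (Psi (a, b)))
          = fun a : ℝ => pd 0 F (Psi (0, b) + a • EuclideanSpace.single (0 : Fin 2) (1:ℝ)) := by
        funext a; rw [hdec a]
      rw [this]
      exact integral_line_pd_zero F hF hFc (Psi (0, b)) 0
    simp only [hline, integral_zero]
  · rw [Measure.volume_eq_prod, integral_prod _ (by rwa [← Measure.volume_eq_prod])]
    have hline : ∀ a : ℝ, ∫ b : ℝ, pd 1 F (Psi (a, b)) = 0 := by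
      intro a
      have hdec := congrFun (Psi_decomp_snd a)
      have : (fun b : ℝ => pd 1 F (Psi (a, b)))
          = fun b : ℝ => pd 1 F (Psi (a, 0) + b • EuclideanSpace.single (1 : Fin 2) (1:ℝ)) := by
        funext b; rw [hdec b]
      rw [this]
      exact integral_line_pd_zero F hF hFc (Psi (a, 0)) 1
    simp only [hline, integral_zero]

lemma pd_add {f h : E2 → ℝ} (hf : ContDiff ℝ (⊤ : ℕ∞) f) (hh : ContDiff ℝ (⊤ : ℕ∞) h)
    (i : Fin 2) (x : E2) :
    pd i (fun y => f y + h y) x = pd i f x + pd i h x := by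
  unfold pd; rw [fderiv_fun_add (diffAt hf x) (diffAt hh x)]; simp

lemma pd_sub {f h : E2 → ℝ} (hf : ContDiff ℝ (⊤ : ℕ∞) f) (hh : ContDiff ℝ (⊤ : ℕ∞) h)
    (i : Fin 2) (x : E2) :
    pd i (fun y => f y - h y) x = pd i f x - pd i h x := by
  unfold pd; rw [fderiv_fun_sub (diffAt hf x) (diffAt hh x)]; simp

lemma pd_const_mul {f : E2 → ℝ} (hf : ContDiff ℝ (⊤ : ℕ∞) f) (a : ℝ) (i : Fin 2) (x : E2) :
    pd i (fun y => a * f y) x = a * pd i f x := by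
  unfold pd; rw [fderiv_const_mul (diffAt hf x) a]; simp


noncomputable section KeyDiv

variable (g : E2 → ℝ)

/-- `|∇g|²`. -/
def QQ : E2 → ℝ := fun x => ∑ j, (pd j g x) ^ 2
/-- `Δg`. -/
def DQ : E2 → ℝ := fun x => ∑ j, pd j (pd j g) x
/-- `(D²g ∇g)_i`. -/
def RQ (i : Fin 2) : E2 → ℝ := fun x => ∑ j, pd j g x * pd i (pd j g) x
/-- the vector field whose divergence realizes the identity. -/
def VQ (i : Fin 2) : E2 → ℝ := fun x =>
  Real.exp (g x) * (-(1/2) * (pd i g x * QQ g x) - pd i g x * DQ g x + RQ g i x)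
/-- `|D²g|²`. -/
def HQ : E2 → ℝ := fun x => ∑ i, ∑ j, (pd i (pd j g) x) ^ 2

variable {g}
variable (hg : ContDiff ℝ (⊤ : ℕ∞) g) (hgc : HasCompactSupport g)
include hg

lemma sExp : ContDiff ℝ (⊤ : ℕ∞) (fun x => Real.exp (g x)) :=
  Real.contDiff_exp.comp hg

lemma sQ : ContDiff ℝ (⊤ : ℕ∞) (QQ g) :=
  ContDiff.sum fun j _ => (contDiff_pd hg j).pow 2

lemma sD : ContDiff ℝ (⊤ : ℕ∞) (DQ g) :=
  ContDiff.sum fun j _ => contDiff_pd (contDiff_pd hg j) j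

lemma sR (i : Fin 2) : ContDiff ℝ (⊤ : ℕ∞) (RQ g i) :=
  ContDiff.sum fun j _ => (contDiff_pd hg j).mul (contDiff_pd (contDiff_pd hg j) i)

lemma sBr (i : Fin 2) : ContDiff ℝ (⊤ : ℕ∞)
    (fun x => -(1/2) * (pd i g x * QQ g x) - pd i g x * DQ g x + RQ g i x) :=
  ((contDiff_const.mul ((contDiff_pd hg i).mul (sQ hg))).sub
    ((contDiff_pd hg i).mul (sD hg))).add (sR hg i)

lemma sV (i : Fin 2) : ContDiff ℝ (⊤ : ℕ∞) (VQ g i) :=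
  (sExp hg).mul (sBr hg i)

lemma sH : ContDiff ℝ (⊤ : ℕ∞) (HQ g) :=
  ContDiff.sum fun i _ => ContDiff.sum fun j _ => (contDiff_pd (contDiff_pd hg j) i).pow 2

omit hg in
include hgc in
lemma cV (i : Fin 2) : HasCompactSupport (VQ g i) := by
  have h1 : HasCompactSupport (fun x => -(1/2) * (pd i g x * QQ g x)) :=
    ((hcs_pd hgc i).mul_right).mul_left
  have h2 : HasCompactSupport (fun x => pd i g x * DQ g x) := (hcs_pd hgc i).mul_right
  have h3 : HasCompactSupport (RQ g i) := by
    have : RQ g i = fun x => pd 0 g x * pd i (pd 0 g) x + pd 1 g x * pd i (pd 1 g) x := by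
      funext x; simp [RQ, Fin.sum_univ_two]
    rw [this]
    exact ((hcs_pd hgc 0).mul_right).add ((hcs_pd hgc 1).mul_right)
  have hbr : HasCompactSupport
      (fun x => -(1/2) * (pd i g x * QQ g x) - pd i g x * DQ g x + RQ g i x) := by
    have : (fun x => -(1/2) * (pd i g x * QQ g x) - pd i g x * DQ g x + RQ g i x)
        = fun x => (-(1/2) * (pd i g x * QQ g x) + (- (pd i g x * DQ g x))) + RQ g i x := by
      funext x; ring
    rw [this]
    exact (h1.add h2.neg).add h3
  exact hbr.mul_left

-- derivative computations
lemma pdQ (i : Fin 2) (x : E2) :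
    pd i (QQ g) x = ∑ j, 2 * pd j g x * pd i (pd j g) x := by
  rw [show QQ g = fun x => ∑ j, (fun (j : Fin 2) (y : E2) => (pd j g y) ^ 2) j x from rfl]
  rw [pd_sum (fun j => (contDiff_pd hg j).pow 2) i x]
  exact Finset.sum_congr rfl fun j _ => pd_sq (contDiff_pd hg j) i x

lemma pdD (i : Fin 2) (x : E2) :
    pd i (DQ g) x = ∑ j, pd i (pd j (pd j g)) x := by
  rw [show DQ g = fun x => ∑ j, (fun (j : Fin 2) (y : E2) => pd j (pd j g) y) j x from rfl]
  rw [pd_sum (fun j => contDiff_pd (contDiff_pd hg j) j) i x]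

lemma pdR (i : Fin 2) (x : E2) :
    pd i (RQ g i) x
      = ∑ j, (pd i (pd j g) x * pd i (pd j g) x + pd j g x * pd i (pd i (pd j g)) x) := by
  rw [show RQ g i = fun x => ∑ j,
      (fun (j : Fin 2) (y : E2) => pd j g y * pd i (pd j g) y) j x from rfl]
  rw [pd_sum (fun j => (contDiff_pd hg j).mul (contDiff_pd (contDiff_pd hg j) i)) i x]
  exact Finset.sum_congr rfl fun j _ =>
    pd_mul (contDiff_pd hg j) (contDiff_pd (contDiff_pd hg j) i) i x

lemma pdV (i : Fin 2) (x : E2) :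
    pd i (VQ g i) x
      = Real.exp (g x) * pd i g x *
          (-(1/2) * (pd i g x * QQ g x) - pd i g x * DQ g x + RQ g i x)
        + Real.exp (g x) *
          (-(1/2) * (pd i (pd i g) x * QQ g x + pd i g x * pd i (QQ g) x)
            - (pd i (pd i g) x * DQ g x + pd i g x * pd i (DQ g) x)
            + pd i (RQ g i) x) := by
  have hbr := sBr hg i
  rw [show VQ g i = fun y => (fun z => Real.exp (g z)) y *
      (fun z => -(1/2) * (pd i g z * QQ g z) - pd i g z * DQ g z + RQ g i z) y from rfl]
  rw [pd_mul (sExp hg) hbr i x]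
  rw [pd_exp hg i x]
  have hsplit : pd i (fun z => -(1/2) * (pd i g z * QQ g z) - pd i g z * DQ g z + RQ g i z) x
      = -(1/2) * pd i (fun z => pd i g z * QQ g z) x
        - pd i (fun z => pd i g z * DQ g z) x + pd i (RQ g i) x := by
    rw [show (fun z => -(1/2) * (pd i g z * QQ g z) - pd i g z * DQ g z + RQ g i z)
        = fun z => (fun w => -(1/2) * (pd i g w * QQ g w) - pd i g w * DQ g w) z
            + RQ g i z from rfl]
    rw [pd_add ((contDiff_const.mul ((contDiff_pd hg i).mul (sQ hg))).sub
      ((contDiff_pd hg i).mul (sD hg))) (sR hg i) i x]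
    rw [show (fun w => -(1/2) * (pd i g w * QQ g w) - pd i g w * DQ g w)
        = fun w => (fun z => -(1/2) * (pd i g z * QQ g z)) w
            - (fun z => pd i g z * DQ g z) w from rfl]
    rw [pd_sub (contDiff_const.mul ((contDiff_pd hg i).mul (sQ hg)))
      ((contDiff_pd hg i).mul (sD hg)) i x]
    rw [pd_const_mul ((contDiff_pd hg i).mul (sQ hg)) (-(1/2)) i x]
  rw [hsplit, pd_mul (contDiff_pd hg i) (sQ hg) i x, pd_mul (contDiff_pd hg i) (sD hg) i x]

lemma key_div (x : E2) :
    (1/2) * (Real.exp (g x) * (QQ g x * (QQ g x + DQ g x)))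
      - Real.exp (g x) * (QQ g x + DQ g x) ^ 2 + Real.exp (g x) * HQ g x
    = ∑ i, pd i (VQ g i) x := by
  have e1 : pd 1 (pd 0 g) = pd 0 (pd 1 g) := funext fun y => pd_symm hg 1 0 y
  have t1 : pd 1 (pd 0 (pd 0 g)) x = pd 0 (pd 0 (pd 1 g)) x := by
    rw [pd_symm (contDiff_pd hg 0) 1 0 x, e1]
  have t2 : pd 1 (pd 1 (pd 0 g)) x = pd 0 (pd 1 (pd 1 g)) x := by
    rw [e1]
    exact pd_symm (contDiff_pd hg 1) 1 0 x
  rw [Fin.sum_univ_two, pdV hg 0 x, pdV hg 1 x, pdQ hg 0 x, pdQ hg 1 x, pdD hg 0 x,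
    pdD hg 1 x, pdR hg 0 x, pdR hg 1 x]
  simp only [QQ, DQ, RQ, HQ, Fin.sum_univ_two]
  rw [t1, t2, e1]
  ring

omit hg in
include hgc in
lemma cQ : HasCompactSupport (QQ g) := by
  have : QQ g = fun x => (pd 0 g x) ^ 2 + (pd 1 g x) ^ 2 := by
    funext x; simp [QQ, Fin.sum_univ_two]
  rw [this]
  have h0 : HasCompactSupport (fun x => (pd 0 g x) ^ 2) := by
    have : (fun x => (pd 0 g x) ^ 2) = fun x => pd 0 g x * pd 0 g x := by funext x; ring
    rw [this]; exact (hcs_pd hgc 0).mul_right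
  have h1 : HasCompactSupport (fun x => (pd 1 g x) ^ 2) := by
    have : (fun x => (pd 1 g x) ^ 2) = fun x => pd 1 g x * pd 1 g x := by funext x; ring
    rw [this]; exact (hcs_pd hgc 1).mul_right
  exact h0.add h1

omit hg in
include hgc in
lemma cD : HasCompactSupport (DQ g) := by
  have : DQ g = fun x => pd 0 (pd 0 g) x + pd 1 (pd 1 g) x := by
    funext x; simp [DQ, Fin.sum_univ_two]
  rw [this]
  exact (hcs_pd (hcs_pd hgc 0) 0).add (hcs_pd (hcs_pd hgc 1) 1)

omit hg in
include hgc in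
lemma cH : HasCompactSupport (HQ g) := by
  have hsq : ∀ i j : Fin 2, HasCompactSupport (fun x => (pd i (pd j g) x) ^ 2) := by
    intro i j
    have : (fun x => (pd i (pd j g) x) ^ 2) = fun x => pd i (pd j g) x * pd i (pd j g) x := by
      funext x; ring
    rw [this]; exact (hcs_pd (hcs_pd hgc j) i).mul_right
  have : HQ g = fun x => (((pd 0 (pd 0 g) x) ^ 2 + (pd 0 (pd 1 g) x) ^ 2)
      + ((pd 1 (pd 0 g) x) ^ 2 + (pd 1 (pd 1 g) x) ^ 2)) := by
    funext x; simp [HQ, Fin.sum_univ_two]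
  rw [this]
  exact ((hsq 0 0).add (hsq 0 1)).add ((hsq 1 0).add (hsq 1 1))

end KeyDiv

/-- Equation (3.4): for `c = exp ∘ g` with `g` smooth and compactly supported,
`(1/2) ∫ c⁻² |∇c|² Δc − ∫ c⁻¹ (Δc)² = −∫ c |D²(ln c)|²`. -/
theorem stmt6 (g : E2 → ℝ) (hg : ContDiff ℝ (⊤ : ℕ∞) g) (hgc : HasCompactSupport g)
    (c : E2 → ℝ) (hc : c = fun x => Real.exp (g x)) :
    (1 / 2) * (∫ x : E2, gradSq c x * lap c x / (c x) ^ 2)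
      - (∫ x : E2, (lap c x) ^ 2 / c x)
      = -∫ x : E2, c x * hessSq (fun y => Real.log (c y)) x := by
  subst hc
  set w : E2 → ℝ := fun x => Real.exp (g x) with hw
  have hwc : ContDiff ℝ (⊤ : ℕ∞) w := sExp hg
  have pdw : ∀ (i : Fin 2) (x : E2), pd i w x = w x * pd i g x := fun i x => pd_exp hg i x
  have pdw' : ∀ i : Fin 2, pd i w = fun x => w x * pd i g x := fun i => funext (pdw i)
  have pddw : ∀ (i j : Fin 2) (x : E2),
      pd j (pd i w) x = w x * (pd j g x * pd i g x + pd j (pd i g) x) := by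
    intro i j x
    rw [pdw' i, pd_mul hwc (contDiff_pd hg i) j x, pdw j x]
    ring
  have lapw : ∀ x, lap w x = w x * (QQ g x + DQ g x) := by
    intro x
    unfold lap
    rw [Fin.sum_univ_two, pddw 0 0 x, pddw 1 1 x]
    simp only [QQ, DQ, Fin.sum_univ_two]
    ring
  have gradw : ∀ x, gradSq w x = w x ^ 2 * QQ g x := by
    intro x
    unfold gradSq
    rw [Fin.sum_univ_two, pdw 0 x, pdw 1 x]
    simp only [QQ, Fin.sum_univ_two]
    ring
  have logw : (fun y => Real.log (w y)) = g := funext fun y => Real.log_exp (g y)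
  have hessw : ∀ x, hessSq (fun y => Real.log (w y)) x = HQ g x := fun x => by rw [logw]; rfl
  have hwpos : ∀ x, 0 < w x := fun x => Real.exp_pos (g x)
  have q1 : ∀ x, gradSq w x * lap w x / w x ^ 2 = w x * (QQ g x * (QQ g x + DQ g x)) := by
    intro x
    rw [gradw, lapw]
    have := (hwpos x).ne'
    field_simp
  have q2 : ∀ x, lap w x ^ 2 / w x = w x * (QQ g x + DQ g x) ^ 2 := by
    intro x
    rw [lapw]
    have := (hwpos x).ne'
    field_simp
  have q3 : ∀ x, w x * hessSq (fun y => Real.log (w y)) x = w x * HQ g x := by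
    intro x; rw [hessw]
  rw [show (fun x => gradSq w x * lap w x / w x ^ 2)
      = fun x => w x * (QQ g x * (QQ g x + DQ g x)) from funext q1]
  rw [show (fun x => lap w x ^ 2 / w x)
      = fun x => w x * (QQ g x + DQ g x) ^ 2 from funext q2]
  rw [show (fun x => w x * hessSq (fun y => Real.log (w y)) x)
      = fun x => w x * HQ g x from funext q3]
  -- integrability
  have i1 : Integrable (fun x => w x * (QQ g x * (QQ g x + DQ g x))) := by
    refine (hwc.continuous.mul ((sQ hg).continuous.mul
      (((sQ hg).add (sD hg)).continuous))).integrable_of_hasCompactSupport ?_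
    exact ((cQ hgc).mul_right).mul_left
  have i2 : Integrable (fun x => w x * (QQ g x + DQ g x) ^ 2) := by
    refine (hwc.continuous.mul
      ((((sQ hg).add (sD hg)).pow 2).continuous)).integrable_of_hasCompactSupport ?_
    have hsq : HasCompactSupport (fun x => (QQ g x + DQ g x) ^ 2) := by
      have : (fun x => (QQ g x + DQ g x) ^ 2)
          = fun x => (QQ g x + DQ g x) * (QQ g x + DQ g x) := by funext x; ring
      rw [this]
      exact ((cQ hgc).add (cD hgc)).mul_right
    exact hsq.mul_left
  have i3 : Integrable (fun x => w x * HQ g x) := by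
    refine (hwc.continuous.mul (sH hg).continuous).integrable_of_hasCompactSupport ?_
    exact (cH hgc).mul_left
  have idiv : ∀ i : Fin 2, Integrable (pd i (VQ g i)) := fun i =>
    (contDiff_pd (sV hg i) i).continuous.integrable_of_hasCompactSupport
      (hcs_pd (cV hgc i) i)
  have hzero : ∫ x : E2, ((1/2) * (w x * (QQ g x * (QQ g x + DQ g x)))
      - w x * (QQ g x + DQ g x) ^ 2 + w x * HQ g x) = 0 := by
    rw [show (fun x : E2 => (1/2) * (w x * (QQ g x * (QQ g x + DQ g x)))
        - w x * (QQ g x + DQ g x) ^ 2 + w x * HQ g x)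
        = fun x => ∑ i, pd i (VQ g i) x from funext fun x => key_div hg x]
    rw [integral_finset_sum Finset.univ (fun i _ => idiv i)]
    exact Finset.sum_eq_zero fun i _ => integral_pd_eq_zero (sV hg i) (cV hgc i) i
  have hsplit : ∫ x : E2, ((1/2) * (w x * (QQ g x * (QQ g x + DQ g x)))
      - w x * (QQ g x + DQ g x) ^ 2 + w x * HQ g x)
      = (1/2) * (∫ x : E2, w x * (QQ g x * (QQ g x + DQ g x)))
        - (∫ x : E2, w x * (QQ g x + DQ g x) ^ 2) + ∫ x : E2, w x * HQ g x := by
    have h12 : Integrable (fun x : E2 => (1/2) * (w x * (QQ g x * (QQ g x + DQ g x)))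
        - w x * (QQ g x + DQ g x) ^ 2) := (i1.const_mul _).sub i2
    rw [integral_add h12 i3, integral_sub (i1.const_mul _) i2, integral_const_mul]
  linarith [hzero, hsplit]
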